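/- The octonionic norm is multiplicative: for all x, y ∈ ℍ × ℍ with the Cayley–Dickson product, N(x * y) = N(x) * N(y). -/

import Mathlib

open Quaternion

/-- The Cayley–Dickson product on `ℍ × ℍ`, modelling the octonions. -/
noncomputable def omul (x y : ℍ[ℝ] × ℍ[ℝ]) : ℍ[ℝ] × ℍ[ℝ] :=
  (x.1 * y.1 - star y.2 * x.2, y.2 * x.1 + x.2 * star y.1)

/-- The octonionic norm on `ℍ × ℍ`. -/
noncomputable def onorm (x : ℍ[ℝ] × ℍ[ℝ]) : ℝ := ‖x.1‖ ^ 2 + ‖x.2‖ ^ 2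

/-- The octonionic norm is multiplicative. -/
theorem onorm_omul (x y : ℍ[ℝ] × ℍ[ℝ]) :
    onorm (omul x y) = onorm x * onorm y := by
  simp only [onorm, omul, sq, ← normSq_eq_norm_mul_self]
  simp only [normSq_def', re_mul, imI_mul, imJ_mul, imK_mul, re_sub, imI_sub, imJ_sub, imK_sub,
    re_add, imI_add, imJ_add, imK_add, re_star, imI_star, imJ_star, imK_star]
  ring
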